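/- With notation as above (K of characteristic zero containing nonzero elements √x, y; A = [[√x·D,0],[0,-√x·D]] with D = diag(1,...,n); C = [[0,I_n],[y·I_n,0]]; standard symplectic form B on K^{2n}): the subspace spanned by the matrices A and y·C generates, as a subalgebra-module, no nonzero proper totally isotropic subspace. Precisely, every nonzero subspace V ⊆ K^{2n} invariant under both A and C and totally isotropic for B must be zero. -/

import Mathlib

open Matrix

noncomputable section

/-- The standard symplectic form matrix `J = [[0, -I_n],[I_n, 0]]`. -/
def Jmat (K : Type*) [Field K] (n : ℕ) : Matrix (Fin n ⊕ Fin n) (Fin n ⊕ Fin n) K :=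
  fromBlocks 0 (-1) 1 0

/-- The symplectic form `B(v, w) = vᵀ J w` on `K^{2n}`. -/
def sympForm (K : Type*) [Field K] (n : ℕ) (v w : Fin n ⊕ Fin n → K) : K :=
  v ⬝ᵥ (Jmat K n).mulVec w

/-- `D = diag(1, 2, …, n)`. -/
def Dmat (K : Type*) [Field K] (n : ℕ) : Matrix (Fin n) (Fin n) K :=
  diagonal fun i => ((i : ℕ) + 1 : K)

/-- `A = [[√x·D, 0], [0, -√x·D]]`. -/
def Amat (K : Type*) [Field K] (n : ℕ) (s : K) : Matrix (Fin n ⊕ Fin n) (Fin n ⊕ Fin n) K :=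
  fromBlocks (s • Dmat K n) 0 0 (-(s • Dmat K n))

/-- `C = [[0, I_n], [y·I_n, 0]]`. -/
def Cmat (K : Type*) [Field K] (n : ℕ) (y : K) : Matrix (Fin n ⊕ Fin n) (Fin n ⊕ Fin n) K :=
  fromBlocks 0 1 (y • 1) 0


open scoped Classical in
lemma key_single {K : Type*} [Field K] {m : Type*} [Fintype m] [DecidableEq m]
    (d : m → K) (hd : Function.Injective d) (V : Submodule K (m → K))
    (hV : ∀ v ∈ V, (Matrix.diagonal d).mulVec v ∈ V) :
    ∀ (N : ℕ) (v : m → K), v ∈ V → ∀ j, v j ≠ 0 →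
      (Finset.univ.filter (fun i => v i ≠ 0)).card ≤ N → Pi.single j (1:K) ∈ V := by
  intro N
  induction N with
  | zero =>
    intro v hv j hj hcard
    exfalso
    have : j ∈ Finset.univ.filter (fun i => v i ≠ 0) := by simp [hj]
    have := Finset.card_pos.mpr ⟨j, this⟩
    omega
  | succ N ih =>
    intro v hv j hj hcard
    by_cases hall : ∀ k, k ≠ j → v k = 0
    · have hv' : Pi.single j (1:K) = (v j)⁻¹ • v := by
        ext i
        by_cases h : i = j
        · subst h; simp [inv_mul_cancel₀ hj]
        · simp [Pi.single_apply, h, hall i h]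
      rw [hv']
      exact V.smul_mem _ hv
    · push_neg at hall
      obtain ⟨k, hk, hvk⟩ := hall
      set w := (Matrix.diagonal d).mulVec v - d k • v with hw
      have hwV : w ∈ V := V.sub_mem (hV v hv) (V.smul_mem _ hv)
      have hwi : ∀ i, w i = (d i - d k) * v i := by
        intro i
        simp [hw, Matrix.mulVec_diagonal]; ring
      apply ih w hwV j
      · rw [hwi]
        exact mul_ne_zero (sub_ne_zero.mpr (fun h => hk (hd h.symm))) hj
      · have hsub : Finset.univ.filter (fun i => w i ≠ 0) ⊆
            (Finset.univ.filter (fun i => v i ≠ 0)).erase k := by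
          intro i hi
          simp only [Finset.mem_filter, Finset.mem_univ, true_and] at hi
          rw [Finset.mem_erase]
          constructor
          · rintro rfl; exact hi (by rw [hwi]; simp)
          · simp only [Finset.mem_filter, Finset.mem_univ, true_and]
            intro hvi; exact hi (by rw [hwi, hvi, mul_zero])
        have := Finset.card_le_card hsub
        have hkmem : k ∈ Finset.univ.filter (fun i => v i ≠ 0) := by simp [hvk]
        have := Finset.card_erase_of_mem hkmem
        omega

/-- every subspace of `K^{2n}` invariant under both `A` and `C`
and totally isotropic for the symplectic form is zero. -/
theorem stmt7 (K : Type*) [Field K] [CharZero K] (n : ℕ) (hn : 1 ≤ n)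
    (s y : K) (hs : s ≠ 0) (hy : y ≠ 0)
    (V : Submodule K (Fin n ⊕ Fin n → K))
    (hA : ∀ v ∈ V, (Amat K n s).mulVec v ∈ V)
    (hC : ∀ v ∈ V, (Cmat K n y).mulVec v ∈ V)
    (hiso : ∀ v ∈ V, ∀ w ∈ V, sympForm K n v w = 0) :
    V = ⊥ := by
  classical
  by_contra hV
  obtain ⟨v, hvV, hv0⟩ := Submodule.exists_mem_ne_zero_of_ne_bot hV
  -- the diagonal of A
  set d : Fin n ⊕ Fin n → K :=
    Sum.elim (fun i => s * ((i : ℕ) + 1)) (fun i => -(s * ((i : ℕ) + 1))) with hd_def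
  have hAdiag : Amat K n s = Matrix.diagonal d := by
    ext i j
    rcases i with i | i <;> rcases j with j | j <;>
      simp [Amat, Dmat, hd_def, Matrix.diagonal_apply, Matrix.fromBlocks,
        apply_ite, mul_comm] <;>
      (try (split <;> simp_all))
  have hinj : Function.Injective d := by
    have base : ∀ (i j : Fin n), s * ((i:ℕ)+1) = s * ((j:ℕ)+1) → i = j := by
      intro i j h
      have := mul_left_cancel₀ hs h
      have : ((i:ℕ)+1 : ℕ) = (j:ℕ)+1 := by exact_mod_cast this
      exact Fin.ext (by omega)
    have mix : ∀ (i j : Fin n), s * ((i:ℕ)+1) ≠ -(s * ((j:ℕ)+1)) := by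
      intro i j h
      have h2 : s * (((i:ℕ)+1 : K) + ((j:ℕ)+1)) = 0 := by
        rw [mul_add, h]; ring
      have h3 := (mul_eq_zero.mp h2).resolve_left hs
      have : (((i:ℕ)+1+((j:ℕ)+1) : ℕ) : K) = 0 := by push_cast; linear_combination h3
      have : ((i:ℕ)+1+((j:ℕ)+1) : ℕ) = 0 := by exact_mod_cast this
      omega
    rintro (i | i) (j | j) h <;> simp only [hd_def, Sum.elim_inl, Sum.elim_inr] at h
    · exact congrArg Sum.inl (base i j h)
    · exact absurd h (mix i j)
    · exact absurd h.symm (mix j i)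
    · have := neg_injective h
      exact congrArg Sum.inr (base i j this)
  have hVd : ∀ w ∈ V, (Matrix.diagonal d).mulVec w ∈ V := by
    intro w hw; rw [← hAdiag]; exact hA w hw
  obtain ⟨j, hj⟩ := Function.ne_iff.mp hv0
  have hsingle : Pi.single j (1:K) ∈ V :=
    key_single d hinj V hVd (Finset.univ.filter (fun i => v i ≠ 0)).card v hvV j hj le_rfl
  -- compute B(e_j, C e_j)
  have hCemem := hC _ hsingle
  have hzero := hiso _ hsingle _ hCemem
  have hJC : Jmat K n * Cmat K n y = fromBlocks (-(y • 1)) 0 0 1 := by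
    rw [Jmat, Cmat, Matrix.fromBlocks_multiply]
    simp
  have hval : sympForm K n (Pi.single j 1) ((Cmat K n y).mulVec (Pi.single j 1))
      = (Jmat K n * Cmat K n y) j j := by
    rw [sympForm, Matrix.mulVec_mulVec]
    simp [Matrix.mulVec, dotProduct, Pi.single_apply]
  rw [hval, hJC] at hzero
  rcases j with i | i
  · simp [Matrix.fromBlocks_apply₁₁, Matrix.one_apply] at hzero
    exact hy hzero
  · simp [Matrix.fromBlocks_apply₂₂, Matrix.one_apply] at hzero
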